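/- Let Ω ⊂ ℝ_{≥0}^n be a compact nonempty symmetric set and define [v]_Ω = min{⟨v,w⟩ : w ∈ Ω}. For k ∈ ℕ set k' = k + n − 1 and let V̌(k,n) ∈ ℕ^n be the vector whose first (k' mod n) coordinates equal ⌈k'/n⌉ and whose remaining coordinates equal ⌊k'/n⌋. Then max{ [v]_Ω : v ∈ ℕ^n, v_i ≥ 1 for all i, Σ_{i=1}^n v_i = k + n − 1 } = [V̌(k,n)]_Ω. -/

import Mathlib

open Finset

section Aux
variable {n : ℕ} {Ω : Set (Fin n → ℝ)}

private noncomputable def fval (Ω : Set (Fin n → ℝ)) (v : Fin n → ℕ) : ℝ :=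
  sInf ((fun w => ∑ i, (v i : ℝ) * w i) '' Ω)

private lemma fval_bddBelow (hcomp : IsCompact Ω) (v : Fin n → ℕ) :
    BddBelow ((fun w => ∑ i, (v i : ℝ) * w i) '' Ω) := by
  have hc : Continuous (fun w : Fin n → ℝ => ∑ i, (v i : ℝ) * w i) :=
    continuous_finset_sum _ fun i _ => (continuous_const.mul (continuous_apply i))
  exact (hcomp.image hc).bddBelow

private lemma fval_le (hcomp : IsCompact Ω) (v : Fin n → ℕ) {w : Fin n → ℝ} (hw : w ∈ Ω) :
    fval Ω v ≤ ∑ i, (v i : ℝ) * w i :=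
  csInf_le (fval_bddBelow hcomp v) ⟨w, hw, rfl⟩

private lemma sum_split {M : Type*} [AddCommMonoid M] (g : Fin n → M) {i j : Fin n}
    (h : i ≠ j) :
    ∑ x, g x = g i + g j + ∑ x ∈ (univ.erase i).erase j, g x := by
  rw [← Finset.add_sum_erase _ g (mem_univ i)]
  rw [← Finset.add_sum_erase _ g (Finset.mem_erase.2 ⟨h.symm, mem_univ j⟩), add_assoc]

private lemma transfer (hcomp : IsCompact Ω) (hne : Ω.Nonempty)
    (hsymm : ∀ σ : Equiv.Perm (Fin n), ∀ x ∈ Ω, (fun i => x (σ i)) ∈ Ω)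
    (v : Fin n → ℕ) {i j : Fin n} (hij : i ≠ j) (hlt : v j + 2 ≤ v i) :
    fval Ω v ≤
      fval Ω (fun x => if x = i then v i - 1 else if x = j then v j + 1 else v x) := by
  set v' : Fin n → ℕ := fun x => if x = i then v i - 1 else if x = j then v j + 1 else v x
    with hv'
  apply le_csInf (hne.image _)
  rintro c ⟨w, hw, rfl⟩
  have hvi : (((v i - 1 : ℕ)) : ℝ) = (v i : ℝ) - 1 := by
    have : 1 ≤ v i := by omega
    push_cast [this]; ring
  rcases le_or_gt (w i) (w j) with hwle | hwlt
  · -- compare with ⟨v, w⟩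
    calc fval Ω v ≤ ∑ x, (v x : ℝ) * w x := fval_le hcomp v hw
      _ ≤ ∑ x, (v' x : ℝ) * w x := by
          rw [sum_split (fun x => (v x : ℝ) * w x) hij,
            sum_split (fun x => (v' x : ℝ) * w x) hij]
          have hrest : ∑ x ∈ (univ.erase i).erase j, (v' x : ℝ) * w x
              = ∑ x ∈ (univ.erase i).erase j, (v x : ℝ) * w x := by
            apply Finset.sum_congr rfl
            intro x hx
            simp only [Finset.mem_erase] at hx
            simp [hv', hx.1, hx.2.1]
          rw [hrest]
          have h1 : (v' i : ℝ) = (v i : ℝ) - 1 := by simp [hv', hvi]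
          have h2 : (v' j : ℝ) = (v j : ℝ) + 1 := by simp [hv', hij.symm]
          rw [h1, h2]
          nlinarith [hwle]
  · -- compare with ⟨v, w ∘ swap i j⟩
    have hsw : (fun x => w (Equiv.swap i j x)) ∈ Ω := hsymm (Equiv.swap i j) w hw
    calc fval Ω v ≤ ∑ x, (v x : ℝ) * w (Equiv.swap i j x) := fval_le hcomp v hsw
      _ ≤ ∑ x, (v' x : ℝ) * w x := by
          rw [sum_split (fun x => (v x : ℝ) * w (Equiv.swap i j x)) hij,
            sum_split (fun x => (v' x : ℝ) * w x) hij]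
          have hrest : ∑ x ∈ (univ.erase i).erase j, (v' x : ℝ) * w x
              = ∑ x ∈ (univ.erase i).erase j, (v x : ℝ) * w (Equiv.swap i j x) := by
            apply Finset.sum_congr rfl
            intro x hx
            simp only [Finset.mem_erase] at hx
            rw [Equiv.swap_apply_of_ne_of_ne hx.2.1 hx.1]
            simp [hv', hx.1, hx.2.1]
          rw [hrest]
          have h1 : (v' i : ℝ) = (v i : ℝ) - 1 := by simp [hv', hvi]
          have h2 : (v' j : ℝ) = (v j : ℝ) + 1 := by simp [hv', hij.symm]
          rw [h1, h2, Equiv.swap_apply_left, Equiv.swap_apply_right]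
          have hvij : (v j : ℝ) + 2 ≤ (v i : ℝ) := by exact_mod_cast hlt
          nlinarith [mul_nonneg (by linarith : (0:ℝ) ≤ (v i : ℝ) - (v j : ℝ) - 1)
            (by linarith : (0:ℝ) ≤ w i - w j)]
private lemma balanced_perm (hn : 0 < n) (v : Fin n → ℕ) (hbal : ∀ i j, v i ≤ v j + 1)
    (k' : ℕ) (hsum : ∑ i, v i = k') :
    ∃ σ : Equiv.Perm (Fin n),
      ∀ x, v x = if ((σ x : Fin n) : ℕ) < k' % n then k' / n + 1 else k' / n := by
  obtain ⟨i0, -, hmin⟩ := Finset.exists_min_image univ v ⟨⟨0, hn⟩, mem_univ _⟩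
  set m := v i0 with hm
  have hub : ∀ x, v x ≤ m + 1 := fun x => hbal x i0
  have hlb : ∀ x, m ≤ v x := fun x => hmin x (mem_univ x)
  classical
  set p : Fin n → Prop := fun x => v x = m + 1 with hp
  set s := univ.filter p with hs
  have hcard : ∑ x, v x = n * m + s.card := by
    have : ∀ x, v x = m + if p x then 1 else 0 := by
      intro x
      have h1 := hub x; have h2 := hlb x
      by_cases hx : p x <;> simp only [hp] at hx <;> simp [hp, hx] <;> omega
    rw [Finset.sum_congr rfl (fun x _ => this x), Finset.sum_add_distrib,
      Finset.sum_const, ← Finset.card_filter]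
    simp [mul_comm, hs]
  have hslt : s.card < n := by
    have hi0 : i0 ∉ s := by simp [hs, hp]; omega
    have : s ⊆ univ.erase i0 := fun x hx =>
      Finset.mem_erase.2 ⟨fun h => hi0 (h ▸ hx), mem_univ x⟩
    calc s.card ≤ (univ.erase i0).card := Finset.card_le_card this
      _ = n - 1 := by simp
      _ < n := by omega
  obtain ⟨hq, hr⟩ : k' / n = m ∧ k' % n = s.card :=
    (Nat.div_mod_unique hn).2 ⟨by omega, hslt⟩
  set q : Fin n → Prop := fun x => (x : ℕ) < k' % n with hqd
  have htcard : (univ.filter q).card = k' % n := by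
    have : univ.filter q = Iio (⟨k' % n, by omega⟩ : Fin n) := by
      ext x; simp [hqd, Fin.lt_def]
    rw [this, Fin.card_Iio]
  have hc1 : Fintype.card {x // p x} = Fintype.card {x // q x} := by
    rw [Fintype.card_subtype, Fintype.card_subtype, htcard, ← hr]
  have hc2 : Fintype.card {x // ¬ p x} = Fintype.card {x // ¬ q x} := by
    rw [Fintype.card_subtype_compl, Fintype.card_subtype_compl, hc1]
  let e1 : {x // p x} ≃ {x // q x} := Fintype.equivOfCardEq hc1
  let e2 : {x // ¬ p x} ≃ {x // ¬ q x} := Fintype.equivOfCardEq hc2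
  let σ : Equiv.Perm (Fin n) :=
    (Equiv.sumCompl p).symm.trans ((e1.sumCongr e2).trans (Equiv.sumCompl q))
  have hσ : ∀ x, q (σ x) ↔ p x := by
    intro x
    by_cases hx : p x
    · simp only [σ, Equiv.trans_apply, Equiv.sumCompl_symm_apply_of_pos hx,
        Equiv.sumCongr_apply, Sum.map_inl, Equiv.sumCompl_apply_inl]
      exact iff_of_true (e1 ⟨x, hx⟩).2 hx
    · simp only [σ, Equiv.trans_apply, Equiv.sumCompl_symm_apply_of_neg hx,
        Equiv.sumCongr_apply, Sum.map_inr, Equiv.sumCompl_apply_inr]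
      exact iff_of_false (e2 ⟨x, hx⟩).2 hx
  refine ⟨σ, fun x => ?_⟩
  by_cases hx : p x
  · rw [if_pos ((hσ x).2 hx), hq]
    simpa [hp] using hx
  · rw [if_neg (fun h => hx ((hσ x).1 h)), hq]
    have h1 := hub x; have h2 := hlb x
    simp only [hp] at hx
    omega

private lemma fval_perm (hsymm : ∀ σ : Equiv.Perm (Fin n), ∀ x ∈ Ω, (fun i => x (σ i)) ∈ Ω)
    (σ : Equiv.Perm (Fin n)) (u : Fin n → ℕ) :
    fval Ω (fun x => u (σ x)) = fval Ω u := by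
  unfold fval
  congr 1
  ext c
  constructor
  · rintro ⟨w, hw, rfl⟩
    refine ⟨fun x => w (σ.symm x), hsymm σ.symm w hw, ?_⟩
    have := Equiv.sum_comp σ (fun x => (u x : ℝ) * w (σ.symm x))
    simpa using this.symm
  · rintro ⟨w, hw, rfl⟩
    refine ⟨fun x => w (σ x), hsymm σ w hw, ?_⟩
    have := Equiv.sum_comp σ (fun x => (u x : ℝ) * w x)
    simpa using this

private lemma key (hn : 0 < n) (hcomp : IsCompact Ω) (hne : Ω.Nonempty)
    (hsymm : ∀ σ : Equiv.Perm (Fin n), ∀ x ∈ Ω, (fun i => x (σ i)) ∈ Ω)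
    (k' : ℕ) (V : Fin n → ℕ)
    (hV : V = fun i : Fin n => if (i : ℕ) < k' % n then k' / n + 1 else k' / n) :
    ∀ N (v : Fin n → ℕ), (∑ i, v i ^ 2) ≤ N → (∀ i, 1 ≤ v i) → (∑ i, v i) = k' →
      fval Ω v ≤ fval Ω V := by
  intro N
  induction N with
  | zero =>
    intro v hm hpos _
    exfalso
    have h1 : v ⟨0, hn⟩ ^ 2 ≤ ∑ i, v i ^ 2 :=
      Finset.single_le_sum (f := fun i => v i ^ 2) (fun i _ => Nat.zero_le _) (mem_univ _)
    have h2 := hpos ⟨0, hn⟩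
    nlinarith
  | succ N ih =>
    intro v hm hpos hsum
    by_cases hbal : ∀ i j, v i ≤ v j + 1
    · obtain ⟨σ, hσ⟩ := balanced_perm hn v hbal k' hsum
      have hveq : v = fun x => V (σ x) := by
        funext x; rw [hσ x, hV]
      rw [hveq, fval_perm hsymm σ V]
    · push_neg at hbal
      obtain ⟨i, j, hij2⟩ := hbal
      have hij : i ≠ j := by rintro rfl; omega
      have hlt : v j + 2 ≤ v i := hij2
      set v' : Fin n → ℕ := fun x => if x = i then v i - 1 else if x = j then v j + 1 else v x
        with hv'
      have hrestsq : ∑ x ∈ (univ.erase i).erase j, v' x ^ 2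
          = ∑ x ∈ (univ.erase i).erase j, v x ^ 2 := by
        apply Finset.sum_congr rfl
        intro x hx
        simp only [Finset.mem_erase] at hx
        simp [hv', hx.1, hx.2.1]
      have hrest1 : ∑ x ∈ (univ.erase i).erase j, v' x
          = ∑ x ∈ (univ.erase i).erase j, v x := by
        apply Finset.sum_congr rfl
        intro x hx
        simp only [Finset.mem_erase] at hx
        simp [hv', hx.1, hx.2.1]
      have hvi' : v' i = v i - 1 := by simp [hv']
      have hvj' : v' j = v j + 1 := by simp [hv', hij.symm]
      have hm' : ∑ x, v' x ^ 2 ≤ N := by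
        rw [sum_split (fun x => v x ^ 2) hij] at hm
        rw [sum_split (fun x => v' x ^ 2) hij, hrestsq, hvi', hvj']
        obtain ⟨c, hc⟩ : ∃ c, v i = v j + 2 + c := ⟨v i - v j - 2, by omega⟩
        have hdec : (v i - 1) ^ 2 + (v j + 1) ^ 2 + 1 ≤ v i ^ 2 + v j ^ 2 := by
          rw [hc]
          have : v j + 2 + c - 1 = v j + 1 + c := by omega
          rw [this]
          nlinarith
        omega
      have hpos' : ∀ x, 1 ≤ v' x := by
        intro x
        have h1 := hpos x
        simp only [hv']
        split_ifs <;> omega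
      have hsum' : ∑ x, v' x = k' := by
        rw [sum_split v hij] at hsum
        rw [sum_split v' hij, hrest1, hvi', hvj']
        omega
      exact le_trans (transfer hcomp hne hsymm v hij hlt) (ih v' hm' hpos' hsum')

end Aux

/-- Collapse of the Gutt–Hutchings formula for symmetric concave toric domains:
the maximum of `[v]_Ω` over positive integer vectors of coordinate sum `k + n - 1`
equals `[V̌(k,n)]_Ω` for the balanced vector `V̌(k,n)`. -/
theorem stmt_3 (n : ℕ) (hn : 0 < n) (Ω : Set (Fin n → ℝ))
    (hcomp : IsCompact Ω) (hne : Ω.Nonempty)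
    (hnonneg : ∀ x ∈ Ω, ∀ i, 0 ≤ x i)
    (hsymm : ∀ σ : Equiv.Perm (Fin n), ∀ x ∈ Ω, (fun i => x (σ i)) ∈ Ω)
    (k : ℕ) (hk : 1 ≤ k) (k' : ℕ) (hk' : k' = k + n - 1)
    (V : Fin n → ℕ)
    (hV : V = fun i : Fin n => if (i : ℕ) < k' % n then k' / n + 1 else k' / n) :
    sSup {c : ℝ | ∃ v : Fin n → ℕ, (∀ i, 1 ≤ v i) ∧ (∑ i, v i) = k + n - 1 ∧
        c = sInf ((fun w => ∑ i, (v i : ℝ) * w i) '' Ω)} =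
      sInf ((fun w => ∑ i, (V i : ℝ) * w i) '' Ω) := by
  have hnk' : n ≤ k' := by omega
  have hVpos : ∀ i, 1 ≤ V i := by
    intro i
    have h1 : 1 ≤ k' / n := (Nat.one_le_div_iff hn).2 hnk'
    rw [hV]
    show 1 ≤ if (i : ℕ) < k' % n then k' / n + 1 else k' / n
    split_ifs <;> omega
  have hVsum : (∑ i, V i) = k + n - 1 := by
    rw [hV]
    have h1 : ∀ x : Fin n, (if (x : ℕ) < k' % n then k' / n + 1 else k' / n)
        = k' / n + (if (x : ℕ) < k' % n then 1 else 0) := by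
      intro x; split_ifs <;> omega
    rw [Finset.sum_congr rfl (fun x _ => h1 x), Finset.sum_add_distrib,
      Finset.sum_const, ← Finset.card_filter]
    have h2 : univ.filter (fun x : Fin n => (x : ℕ) < k' % n)
        = Iio (⟨k' % n, Nat.mod_lt _ hn⟩ : Fin n) := by
      ext x; simp [Fin.lt_def]
    rw [h2, Fin.card_Iio]
    simp only [smul_eq_mul, Finset.card_univ, Fintype.card_fin]
    have h3 := Nat.div_add_mod k' n
    omega
  apply IsGreatest.csSup_eq
  constructor
  · exact ⟨V, hVpos, hVsum, rfl⟩
  · rintro c ⟨v, hpos, hsum, rfl⟩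
    exact key hn hcomp hne hsymm k' V hV (∑ i, v i ^ 2) v le_rfl hpos (by omega)
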